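/- Let n ≥ 2 be an integer and let L be the language recognized by the 1-monster DFA M_{n,{n−1}}, whose alphabet is Σ = (Fin n → Fin n), state set Fin n, initial state 0, unique final state n−1, and transition δ(q, f) = f(q). Then sc(L) = n and the reverse (mirror) language L^R = {a_k⋯a_1 | a_1⋯a_k ∈ L} satisfies sc(L^R) = 2^n. -/

import Mathlib

/-- `L` is recognized by some complete DFA with exactly `n` states. -/
def recognizedBy {α : Type} (L : Language α) (n : ℕ) : Prop :=
  ∃ M : DFA α (Fin n), M.accepts = L

/-- The state complexity of a language: the minimal number of states of a
complete DFA recognizing it. -/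
noncomputable def sc {α : Type} (L : Language α) : ℕ :=
  sInf {n | recognizedBy L n}

/-- Relabeling of a DFA along an equivalence of state types. -/
def DFA.reindex' {α σ τ : Type*} (M : DFA α σ) (e : σ ≃ τ) : DFA α τ where
  step t a := e (M.step (e.symm t) a)
  start := e M.start
  accept := e.symm ⁻¹' M.accept

lemma DFA.reindex'_evalFrom {α σ τ : Type*} (M : DFA α σ) (e : σ ≃ τ)
    (s : σ) (w : List α) : (M.reindex' e).evalFrom (e s) w = e (M.evalFrom s w) := by
  induction w generalizing s with
  | nil => rfl
  | cons a w ih =>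
    show (M.reindex' e).evalFrom ((M.reindex' e).step (e s) a) w = _
    have : (M.reindex' e).step (e s) a = e (M.step s a) := by
      simp [DFA.reindex']
    rw [this, ih]
    rfl

lemma DFA.reindex'_accepts {α σ τ : Type*} (M : DFA α σ) (e : σ ≃ τ) :
    (M.reindex' e).accepts = M.accepts := by
  ext w
  rw [DFA.mem_accepts, DFA.mem_accepts]
  have : (M.reindex' e).eval w = e (M.eval w) := DFA.reindex'_evalFrom M e M.start w
  rw [this]
  simp [DFA.reindex']

/-- Lower bound on number of states from a family of pairwise distinguishable words. -/
lemma card_le_of_distinguishable {α : Type} {L : Language α} {ι : Type} [Fintype ι]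
    (w : ι → List α)
    (h : ∀ i j, i ≠ j → ∃ z, ¬ ((w i ++ z ∈ L) ↔ (w j ++ z ∈ L)))
    {m : ℕ} (M : DFA α (Fin m)) (hM : M.accepts = L) :
    Fintype.card ι ≤ m := by
  have hinj : Function.Injective (fun i => M.eval (w i)) := by
    intro i j hij
    by_contra hne
    obtain ⟨z, hz⟩ := h i j hne
    apply hz
    simp only at hij
    have hij' : M.evalFrom M.start (w i) = M.evalFrom M.start (w j) := hij
    rw [← hM, DFA.mem_accepts, DFA.mem_accepts]
    show M.evalFrom M.start (w i ++ z) ∈ M.accept ↔ M.evalFrom M.start (w j ++ z) ∈ M.accept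
    rw [DFA.evalFrom_of_append, DFA.evalFrom_of_append, hij']
  simpa using Fintype.card_le_of_injective _ hinj

lemma sc_eq {α : Type} (L : Language α) (n : ℕ)
    (hub : recognizedBy L n) (hlb : ∀ m, recognizedBy L m → n ≤ m) :
    sc L = n := by
  refine le_antisymm (Nat.sInf_le hub) ?_
  exact le_csInf ⟨n, hub⟩ hlb

lemma card_fun_bool (n : ℕ) : Fintype.card (Fin n → Bool) = 2 ^ n := by
  simp

/-- let `L` be the language of the 1-monster DFA `M_{n,{n-1}}`
(alphabet `Fin n → Fin n`, states `Fin n`, initial state `0`, unique final state `n-1`,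
transition `δ(q, f) = f q`). Then `sc L = n` and the reverse language
`L^R = {w | w.reverse ∈ L}` has state complexity `2^n`. -/
theorem stmt13 (n : ℕ) (hn : 2 ≤ n) (L : Language (Fin n → Fin n))
    (hL : L = (DFA.mk (fun (q : Fin n) (f : Fin n → Fin n) => f q)
        (⟨0, by omega⟩ : Fin n)
        ({(⟨n - 1, by omega⟩ : Fin n)} : Set (Fin n))).accepts) :
    sc L = n ∧ sc {w | w.reverse ∈ L} = 2 ^ n := by
  set z0 : Fin n := ⟨0, by omega⟩ with hz0
  set lst : Fin n := ⟨n - 1, by omega⟩ with hlst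
  have hne : lst ≠ z0 := by
    simp only [hz0, hlst, Ne, Fin.mk.injEq]
    omega
  set M : DFA (Fin n → Fin n) (Fin n) :=
    DFA.mk (fun (q : Fin n) (f : Fin n → Fin n) => f q) z0 {lst} with hM
  -- membership characterization
  have hmem : ∀ w : List (Fin n → Fin n), w ∈ L ↔ M.eval w = lst := by
    intro w
    rw [hL, DFA.mem_accepts]
    rfl
  constructor
  · -- sc L = n
    apply sc_eq
    · exact ⟨M, hL.symm⟩
    · intro m ⟨M', hM'⟩
      have := card_le_of_distinguishable (L := L)
        (fun p : Fin n => [fun _ => p]) ?_ M' hM'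
      · simpa using this
      · intro p q hpq
        refine ⟨[fun r => if r = p then lst else z0], ?_⟩
        rw [hmem, hmem]
        have h1 : M.eval ([fun _ => p] ++ [fun r => if r = p then lst else z0]) = lst := by
          simp [M, DFA.eval, DFA.evalFrom]
        have h2 : M.eval ([fun _ => q] ++ [fun r => if r = p then lst else z0]) = z0 := by
          simp [M, DFA.eval, DFA.evalFrom, if_neg hpq.symm]
        rw [h1, h2]
        simp [hne.symm]
  · -- sc L^R = 2^n
    -- subset automaton over Fin n → Bool
    set N : DFA (Fin n → Fin n) (Fin n → Bool) :=
      DFA.mk (fun S f => fun q => S (f q)) (fun q => decide (q = lst))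
        {S | S z0 = true} with hN
    have key : ∀ (w : List (Fin n → Fin n)) (S : Fin n → Bool),
        N.evalFrom S w = fun q => S (M.evalFrom q w.reverse) := by
      intro w
      induction w using List.reverseRecOn with
      | nil => intro S; rfl
      | append_singleton w a ih =>
        intro S
        rw [DFA.evalFrom_append_singleton, ih]
        funext q
        show S (M.evalFrom (a q) w.reverse) = S (M.evalFrom q (w ++ [a]).reverse)
        rw [List.reverse_append]
        rfl
    have hNacc : N.accepts = {w | w.reverse ∈ L} := by
      ext w
      rw [DFA.mem_accepts]
      show (N.eval w) ∈ N.accept ↔ w.reverse ∈ L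
      rw [hmem]
      have : N.eval w = fun q => decide (M.evalFrom q w.reverse = lst) := by
        rw [DFA.eval, key]
      rw [this]
      show decide (M.evalFrom z0 w.reverse = lst) = true ↔ _
      rw [decide_eq_true_iff]
      rfl
    have hcard : Fintype.card (Fin n → Bool) = 2 ^ n := card_fun_bool n
    have e : (Fin n → Bool) ≃ Fin (2 ^ n) :=
      Fintype.equivFinOfCardEq hcard
    apply sc_eq
    · exact ⟨N.reindex' e, by rw [DFA.reindex'_accepts, hNacc]⟩
    · intro m ⟨M', hM'⟩
      have := card_le_of_distinguishable (L := {w | w.reverse ∈ L})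
        (ι := Fin n → Bool)
        (fun S => [fun q => if S q then lst else z0]) ?_ M' hM'
      · rwa [hcard] at this
      · intro S T hST
        have : ∃ q, S q ≠ T q := by
          by_contra h
          push_neg at h
          exact hST (funext h)
        obtain ⟨q, hq⟩ := this
        refine ⟨[fun _ => q], ?_⟩
        have hcomp : ∀ U : Fin n → Bool,
            ([fun r => if U r then lst else z0] ++ [fun _ => q] ∈
              ({w | w.reverse ∈ L} : Language (Fin n → Fin n))) ↔ U q = true := by
          intro U
          show (([fun r => if U r then lst else z0] ++ [fun _ => q]).reverse ∈ L) ↔ _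
          rw [hmem]
          have : ([fun r => if U r then lst else z0] ++ [(fun _ => q)]).reverse
              = [(fun _ => q), fun r => if U r then lst else z0] := by simp
          rw [this]
          have : M.eval [(fun _ => q : Fin n → Fin n), fun r => if U r then lst else z0]
              = if U q then lst else z0 := by
            simp [M, DFA.eval, DFA.evalFrom]
          rw [this]
          cases hUq : U q <;> simp [hUq, hne, Ne.symm hne]
        exact fun hiff => hq (Bool.eq_iff_iff.mpr ((hcomp S).symm.trans (hiff.trans (hcomp T))))
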